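/- Suppose g : [0,1] → ℝ is differentiable and satisfies g'(t) ≥ OPT − g(t) for all t ∈ [0,1], where OPT ≥ 0 is a constant and g(0) ≥ 0. Then g(1) ≥ (1 − 1/e) · OPT. -/

import Mathlib

theorem stmt_8 (g g' : ℝ → ℝ) (OPT : ℝ) (hOPT : 0 ≤ OPT) (hg0 : 0 ≤ g 0)
    (hderiv : ∀ t ∈ Set.Icc (0:ℝ) 1, HasDerivAt g (g' t) t)
    (hineq : ∀ t ∈ Set.Icc (0:ℝ) 1, g' t ≥ OPT - g t) :
    g 1 ≥ (1 - 1 / Real.exp 1) * OPT := by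
  set h : ℝ → ℝ := fun t => Real.exp t * (g t - OPT) with hh
  have hd : ∀ t ∈ Set.Icc (0:ℝ) 1,
      HasDerivAt h (Real.exp t * (g t - OPT) + Real.exp t * g' t) t := by
    intro t ht
    have := (Real.hasDerivAt_exp t).mul ((hderiv t ht).sub_const OPT)
    exact this
  have hmono : MonotoneOn h (Set.Icc (0:ℝ) 1) := by
    apply monotoneOn_of_deriv_nonneg (convex_Icc 0 1)
    · exact ContinuousOn.mul Real.continuous_exp.continuousOn
        (ContinuousOn.sub (fun t ht => (hderiv t ht).continuousAt.continuousWithinAt)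
          continuousOn_const)
    · intro t ht
      rw [interior_Icc] at ht
      exact ((hd t (Set.mem_Icc_of_Ioo ht)).differentiableAt).differentiableWithinAt
    · intro t ht
      rw [interior_Icc] at ht
      have ht' := Set.mem_Icc_of_Ioo ht
      rw [(hd t ht').deriv]
      have h1 := hineq t ht'
      nlinarith [Real.exp_pos t]
  have key : h 0 ≤ h 1 := hmono (by norm_num) (by norm_num) (by norm_num)
  have hE := Real.exp_pos 1
  simp only [hh, Real.exp_zero, one_mul] at key
  have h3 : OPT - g 1 ≤ OPT / Real.exp 1 := by
    rw [le_div_iff₀ hE]; nlinarith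
  rw [ge_iff_le, sub_mul, one_mul, div_mul_eq_mul_div, one_mul]
  linarith
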